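/- arXiv:2004.10866 — 3 statements merged into one kernel-verified Lean document; each statement's English description precedes it below -/
import Mathlib

section
/- The function u₊(x) = ψ₀(1 + 2sinh²α/(1 + cosh α·cosh(Ax))) satisfies the ordinary differential equation −u'' + u − 2u³ = h on ℝ, where h = √2·cosh²α/(1+2cosh²α)^{3/2}. -/
private lemma stmt7_key_alg (ψ A s c ch sh h2 : ℝ) (hv : 1 + c * ch ≠ 0)
    (hA : A ^ 2 = 4 * s ^ 2 * ψ ^ 2) (hsh : sh ^ 2 = ch ^ 2 - 1)
    (hs : s ^ 2 = c ^ 2 - 1)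
    (hψ : ψ ^ 2 * (2 * (1 + 2 * c ^ 2)) = 1) (hh : h2 = 4 * c ^ 2 * ψ ^ 3) :
    -(-2 * ψ * s ^ 2 * c * A ^ 2 * (ch * (1 + c * ch) - 2 * c * sh ^ 2) / (1 + c * ch) ^ 3)
      + ψ * (1 + 2 * s ^ 2 / (1 + c * ch))
      - 2 * (ψ * (1 + 2 * s ^ 2 / (1 + c * ch))) ^ 3 = h2 := by
  subst hh
  field_simp
  linear_combination (ψ * 2 * s ^ 2 * c * (ch * (1 + c * ch) - 2 * c * sh ^ 2)) * hA + (-16 * ψ ^ 3 * s ^ 4 * c ^ 2) * hsh + (-ψ * (1 + c * ch) ^ 2 * ((1 + c * ch) + 2 * s ^ 2)) * hψ + ψ ^ 3 * (8 * c * (ch - c * ch ^ 2 + 2 * c) * (s ^ 2 + (c ^ 2 - 1)) + 2 * (2 + 4 * c ^ 2) * (1 + c * ch) ^ 2 - 4 * (((1 + c * ch) + 2 * s ^ 2) ^ 2 + ((1 + c * ch) + 2 * s ^ 2) * ((1 + c * ch) + 2 * (c ^ 2 - 1)) + ((1 + c * ch) + 2 * (c ^ 2 - 1)) ^ 2)) *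 hs

theorem stmt7 (α : ℝ) (hα : 0 < α) :
    let ψ₀ : ℝ := 1 / Real.sqrt (2 * (1 + 2 * Real.cosh α ^ 2))
    let A : ℝ := Real.sqrt 2 * Real.sinh α / Real.sqrt (1 + 2 * Real.cosh α ^ 2)
    let h : ℝ := Real.sqrt 2 * Real.cosh α ^ 2 / (1 + 2 * Real.cosh α ^ 2) ^ ((3 : ℝ) / 2)
    let u : ℝ → ℝ := fun x =>
      ψ₀ * (1 + 2 * Real.sinh α ^ 2 / (1 + Real.cosh α * Real.cosh (A * x)))
    ContDiff ℝ 2 u ∧ ∀ x : ℝ, -(deriv (deriv u)) x + u x - 2 * u x ^ 3 = h := by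
  intro ψ₀ A h u
  have hc : 1 ≤ Real.cosh α := Real.one_le_cosh α
  have ht1 : (0:ℝ) < 1 + 2 * Real.cosh α ^ 2 := by nlinarith
  have ht : (0:ℝ) < 2 * (1 + 2 * Real.cosh α ^ 2) := by linarith
  have hsq : Real.sqrt (2 * (1 + 2 * Real.cosh α ^ 2)) ^ 2 = 2 * (1 + 2 * Real.cosh α ^ 2) :=
    Real.sq_sqrt ht.le
  have hsq1 : Real.sqrt (1 + 2 * Real.cosh α ^ 2) ^ 2 = 1 + 2 * Real.cosh α ^ 2 :=
    Real.sq_sqrt ht1.le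
  have hsq2 : Real.sqrt 2 ^ 2 = 2 := Real.sq_sqrt (by norm_num)
  have hne : Real.sqrt (2 * (1 + 2 * Real.cosh α ^ 2)) ≠ 0 := (Real.sqrt_pos.mpr ht).ne'
  have hne1 : Real.sqrt (1 + 2 * Real.cosh α ^ 2) ≠ 0 := (Real.sqrt_pos.mpr ht1).ne'
  have hne2 : Real.sqrt 2 ≠ 0 := (Real.sqrt_pos.mpr (by norm_num)).ne'
  -- scalar facts
  have hψ : ψ₀ ^ 2 * (2 * (1 + 2 * Real.cosh α ^ 2)) = 1 := by
    show (1 / Real.sqrt (2 * (1 + 2 * Real.cosh α ^ 2))) ^ 2 * _ = 1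
    field_simp
    rw [hsq]
  have hA2 : A ^ 2 = 4 * Real.sinh α ^ 2 * ψ₀ ^ 2 := by
    show (Real.sqrt 2 * Real.sinh α / Real.sqrt (1 + 2 * Real.cosh α ^ 2)) ^ 2
      = 4 * Real.sinh α ^ 2 * (1 / Real.sqrt (2 * (1 + 2 * Real.cosh α ^ 2))) ^ 2
    field_simp
    rw [hsq, hsq1, hsq2]
    ring
  have hh : h = 4 * Real.cosh α ^ 2 * ψ₀ ^ 3 := by
    show Real.sqrt 2 * Real.cosh α ^ 2 / (1 + 2 * Real.cosh α ^ 2) ^ ((3:ℝ)/2)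
      = 4 * Real.cosh α ^ 2 * (1 / Real.sqrt (2 * (1 + 2 * Real.cosh α ^ 2))) ^ 3
    have h32 : (1 + 2 * Real.cosh α ^ 2) ^ ((3:ℝ)/2)
        = Real.sqrt (1 + 2 * Real.cosh α ^ 2) ^ 3 := by
      rw [Real.sqrt_eq_rpow, ← Real.rpow_natCast ((1 + 2 * Real.cosh α ^ 2) ^ ((1:ℝ)/2)) 3,
        ← Real.rpow_mul ht1.le]
      norm_num
    have hmul : Real.sqrt (2 * (1 + 2 * Real.cosh α ^ 2))
        = Real.sqrt 2 * Real.sqrt (1 + 2 * Real.cosh α ^ 2) := Real.sqrt_mul (by norm_num) _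
    rw [h32, hmul]
    have h32ne : Real.sqrt (1 + 2 * Real.cosh α ^ 2) ^ 3 ≠ 0 := pow_ne_zero _ hne1
    field_simp
    linear_combination (Real.sqrt 2 ^ 2 + 2) * hsq2
  -- calculus
  have hudef : u = fun x =>
      ψ₀ * (1 + 2 * Real.sinh α ^ 2 / (1 + Real.cosh α * Real.cosh (A * x))) := rfl
  set s := Real.sinh α with hs_def
  set c := Real.cosh α with hc_def
  set v : ℝ → ℝ := fun y => 1 + c * Real.cosh (A * y) with hv_def
  set u1 : ℝ → ℝ := fun y => -(2 * ψ₀ * s ^ 2 * c * A) * Real.sinh (A * y) / (v y) ^ 2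
    with hu1_def
  have hvpos : ∀ x, 0 < v x := fun x => by
    have h1 : 1 ≤ Real.cosh (A * x) := Real.one_le_cosh _
    have : 0 < c * Real.cosh (A * x) := by nlinarith
    simp only [hv_def]; linarith
  have hvne : ∀ x, v x ≠ 0 := fun x => (hvpos x).ne'
  have hAx : ∀ x : ℝ, HasDerivAt (fun y : ℝ => A * y) A x := fun x => by
    simpa using (hasDerivAt_id x).const_mul A
  have hv : ∀ x, HasDerivAt v (c * (Real.sinh (A * x) * A)) x := fun x =>
    (((Real.hasDerivAt_cosh (A * x)).comp x (hAx x)).const_mul c).const_add 1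
  have hsinh : ∀ x, HasDerivAt (fun y => Real.sinh (A * y)) (Real.cosh (A * x) * A) x :=
    fun x => (Real.hasDerivAt_sinh (A * x)).comp x (hAx x)
  have hu1 : ∀ x, HasDerivAt u (u1 x) x := fun x => by
    have h1 : HasDerivAt (fun y => ψ₀ * (1 + 2 * s ^ 2 * (v y)⁻¹))
        (ψ₀ * (2 * s ^ 2 * (-(c * (Real.sinh (A * x) * A)) / (v x) ^ 2))) x :=
      ((((hv x).inv (hvne x)).const_mul (2 * s ^ 2)).const_add 1).const_mul ψ₀
    have he : u = fun y => ψ₀ * (1 + 2 * s ^ 2 * (v y)⁻¹) := by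
      funext y; simp [hudef, hv_def, div_eq_mul_inv]
    rw [he]
    convert h1 using 1
    simp only [hu1_def]
    field_simp
  have hu2 : ∀ x, HasDerivAt u1
      (-2 * ψ₀ * s ^ 2 * c * A ^ 2 *
        (Real.cosh (A * x) * (1 + c * Real.cosh (A * x)) - 2 * c * Real.sinh (A * x) ^ 2)
        / (1 + c * Real.cosh (A * x)) ^ 3) x := fun x => by
    have h2 : HasDerivAt (fun y => (v y) ^ 2)
        (2 * v x ^ 1 * (c * (Real.sinh (A * x) * A))) x := (hv x).pow 2
    have h3 : HasDerivAt (fun y => ((v y) ^ 2)⁻¹)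
        (-(2 * v x ^ 1 * (c * (Real.sinh (A * x) * A))) / ((v x) ^ 2) ^ 2) x :=
      h2.inv (pow_ne_zero 2 (hvne x))
    have h4 := ((hsinh x).mul h3).const_mul (-(2 * ψ₀ * s ^ 2 * c * A))
    have he : u1 = fun y => -(2 * ψ₀ * s ^ 2 * c * A) *
        (Real.sinh (A * y) * ((v y) ^ 2)⁻¹) := by
      funext y; simp [hu1_def, div_eq_mul_inv, mul_assoc]
    rw [he]
    convert h4 using 1
    · rfl
    · rfl
    · rfl
    have hv1 : v x = 1 + c * Real.cosh (A * x) := rfl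
    rw [← hv1]
    field_simp
    ring
  have hderiv1 : deriv u = u1 := funext fun x => (hu1 x).deriv
  constructor
  · have hvc : ContDiff ℝ 2 v := by
      rw [hv_def]
      exact contDiff_const.add (contDiff_const.mul (Real.contDiff_cosh.comp
        (contDiff_const.mul contDiff_id)))
    rw [hudef]
    exact contDiff_const.mul (contDiff_const.add (ContDiff.div contDiff_const hvc hvne))
  · intro x
    have hch : Real.cosh (A * x) ^ 2 - Real.sinh (A * x) ^ 2 = 1 := by
      have := Real.sinh_sq (A * x); linarith
    have hsa : s ^ 2 = c ^ 2 - 1 := Real.sinh_sq α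
    have hgoal2 : deriv (deriv u) x = -2 * ψ₀ * s ^ 2 * c * A ^ 2 *
        (Real.cosh (A * x) * (1 + c * Real.cosh (A * x)) - 2 * c * Real.sinh (A * x) ^ 2)
        / (1 + c * Real.cosh (A * x)) ^ 3 := by
      rw [hderiv1]; exact (hu2 x).deriv
    show -(deriv (deriv u)) x + u x - 2 * u x ^ 3 = h
    rw [hgoal2, hudef]
    exact stmt7_key_alg ψ₀ A s c (Real.cosh (A * x)) (Real.sinh (A * x)) h
      (hvne x) hA2 (by linarith) hsa hψ hh
end

section
/- The function u₋(x) = ψ₀(1 + 2sinh²α/(1 − cosh α·cosh(Ax))) satisfies the ordinary differential equation −u'' + u − 2u³ = h on ℝ, where h = √2·cosh²α/(1+2cosh²α)^{3/2}. -/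
theorem stmt8 (α : ℝ) (hα : 0 < α) :
    let ψ₀ : ℝ := 1 / Real.sqrt (2 * (1 + 2 * Real.cosh α ^ 2))
    let A : ℝ := Real.sqrt 2 * Real.sinh α / Real.sqrt (1 + 2 * Real.cosh α ^ 2)
    let h : ℝ := Real.sqrt 2 * Real.cosh α ^ 2 / (1 + 2 * Real.cosh α ^ 2) ^ ((3 : ℝ) / 2)
    let u : ℝ → ℝ := fun x =>
      ψ₀ * (1 + 2 * Real.sinh α ^ 2 / (1 - Real.cosh α * Real.cosh (A * x)))
    ContDiff ℝ 2 u ∧ ∀ x : ℝ, -(deriv (deriv u)) x + u x - 2 * u x ^ 3 = h := by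
  intro ψ₀ A h u
  set c : ℝ := Real.cosh α with hc
  set s : ℝ := Real.sinh α with hs
  have hc1 : 1 < c := Real.one_lt_cosh.2 hα.ne'
  have ht : (0:ℝ) < 1 + 2 * c ^ 2 := by positivity
  have hden : ∀ x : ℝ, 1 - c * Real.cosh (A * x) ≠ 0 := by
    intro x
    have h1 : 1 ≤ Real.cosh (A * x) := Real.one_le_cosh _
    nlinarith
  -- basic facts
  have hs2 : s ^ 2 = c ^ 2 - 1 := by
    rw [hs, hc, Real.sinh_sq]
  have hA2 : A ^ 2 = 2 * (c ^ 2 - 1) / (1 + 2 * c ^ 2) := by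
    show (Real.sqrt 2 * s / Real.sqrt (1 + 2 * c ^ 2)) ^ 2 = _
    rw [div_pow, mul_pow, Real.sq_sqrt (by norm_num : (0:ℝ) ≤ 2),
      Real.sq_sqrt ht.le, hs2]
  have hp2 : ψ₀ ^ 2 = 1 / (2 * (1 + 2 * c ^ 2)) := by
    show (1 / Real.sqrt (2 * (1 + 2 * c ^ 2))) ^ 2 = _
    rw [div_pow, Real.sq_sqrt (by positivity), one_pow]
  have hh : h = 4 * c ^ 2 * ψ₀ ^ 3 := by
    show Real.sqrt 2 * c ^ 2 / (1 + 2 * c ^ 2) ^ ((3:ℝ)/2)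
        = 4 * c ^ 2 * (1 / Real.sqrt (2 * (1 + 2 * c ^ 2))) ^ 3
    have h32 : ((1 + 2 * c ^ 2 : ℝ)) ^ ((3:ℝ)/2)
        = (1 + 2 * c ^ 2) * Real.sqrt (1 + 2 * c ^ 2) := by
      rw [show (3:ℝ)/2 = 1 + 1/2 by norm_num, Real.rpow_add ht, Real.rpow_one,
        ← Real.sqrt_eq_rpow]
    have hmul : Real.sqrt (2 * (1 + 2 * c ^ 2))
        = Real.sqrt 2 * Real.sqrt (1 + 2 * c ^ 2) :=
      Real.sqrt_mul (by norm_num) _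
    have hsq2 : Real.sqrt 2 ^ 2 = 2 := Real.sq_sqrt (by norm_num)
    have hsqt : Real.sqrt (1 + 2 * c ^ 2) ^ 2 = 1 + 2 * c ^ 2 := Real.sq_sqrt ht.le
    have h2pos : (0:ℝ) < Real.sqrt 2 := Real.sqrt_pos.2 (by norm_num)
    have htpos : (0:ℝ) < Real.sqrt (1 + 2 * c ^ 2) := Real.sqrt_pos.2 ht
    rw [h32, hmul]
    field_simp
    rw [show Real.sqrt 2 ^ 4 = (Real.sqrt 2 ^ 2) ^ 2 by ring, hsq2, Real.sq_sqrt (by positivity)]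
    ring
  -- derivatives
  have hderiv1 : ∀ x : ℝ, HasDerivAt u
      (2 * s ^ 2 * ψ₀ * c * A * Real.sinh (A * x) / (1 - c * Real.cosh (A * x)) ^ 2) x := by
    intro x
    have hcos : HasDerivAt (fun y : ℝ => Real.cosh (A * y)) (Real.sinh (A * x) * A) x := by
      simpa [Function.comp_def] using (Real.hasDerivAt_cosh (A * x)).comp x ((hasDerivAt_id x).const_mul A)
    have hg : HasDerivAt (fun y : ℝ => 1 - c * Real.cosh (A * y))
        (-(c * (Real.sinh (A * x) * A))) x := (hcos.const_mul c).const_sub 1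
    have hdiv := ((hasDerivAt_const x (2 * s ^ 2)).div hg (hden x)).const_add 1
    have := hdiv.const_mul ψ₀
    refine this.congr_deriv ?_
    have hgx := hden x
    field_simp
    ring
  have hu' : deriv u = fun x =>
      2 * s ^ 2 * ψ₀ * c * A * Real.sinh (A * x) / (1 - c * Real.cosh (A * x)) ^ 2 :=
    funext fun x => (hderiv1 x).deriv
  have hderiv2 : ∀ x : ℝ, HasDerivAt (deriv u)
      (2 * s ^ 2 * ψ₀ * c * A ^ 2 *
        (Real.cosh (A * x) * (1 - c * Real.cosh (A * x)) + 2 * c * Real.sinh (A * x) ^ 2)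
        / (1 - c * Real.cosh (A * x)) ^ 3) x := by
    intro x
    rw [hu']
    have hsin : HasDerivAt (fun y : ℝ => Real.sinh (A * y)) (Real.cosh (A * x) * A) x := by
      simpa [Function.comp_def] using (Real.hasDerivAt_sinh (A * x)).comp x ((hasDerivAt_id x).const_mul A)
    have hcos : HasDerivAt (fun y : ℝ => Real.cosh (A * y)) (Real.sinh (A * x) * A) x := by
      simpa [Function.comp_def] using (Real.hasDerivAt_cosh (A * x)).comp x ((hasDerivAt_id x).const_mul A)
    have hg : HasDerivAt (fun y : ℝ => 1 - c * Real.cosh (A * y))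
        (-(c * (Real.sinh (A * x) * A))) x := (hcos.const_mul c).const_sub 1
    have hg2 : HasDerivAt (fun y : ℝ => (1 - c * Real.cosh (A * y)) ^ 2)
        (2 * (1 - c * Real.cosh (A * x)) ^ 1 * (-(c * (Real.sinh (A * x) * A)))) x := hg.pow 2
    have hnum : HasDerivAt (fun y : ℝ => 2 * s ^ 2 * ψ₀ * c * A * Real.sinh (A * y))
        (2 * s ^ 2 * ψ₀ * c * A * (Real.cosh (A * x) * A)) x := hsin.const_mul _
    have hdiv := hnum.div hg2 (pow_ne_zero 2 (hden x))
    refine hdiv.congr_deriv ?_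
    have hgx := hden x
    field_simp
    ring
  constructor
  · -- smoothness
    have hgc : ContDiff ℝ 2 (fun x : ℝ => 1 - c * Real.cosh (A * x)) :=
      contDiff_const.sub (contDiff_const.mul
        ((Real.contDiff_cosh.of_le le_top).comp (contDiff_const.mul contDiff_id)))
    exact contDiff_const.mul (contDiff_const.add (contDiff_const.div hgc hden))
  · intro x
    have hdd : deriv (deriv u) x = 2 * s ^ 2 * ψ₀ * c * A ^ 2 *
        (Real.cosh (A * x) * (1 - c * Real.cosh (A * x)) + 2 * c * Real.sinh (A * x) ^ 2)
        / (1 - c * Real.cosh (A * x)) ^ 3 := (hderiv2 x).deriv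
    show -(deriv (deriv u) x) + ψ₀ * (1 + 2 * s ^ 2 / (1 - c * Real.cosh (A * x)))
        - 2 * (ψ₀ * (1 + 2 * s ^ 2 / (1 - c * Real.cosh (A * x)))) ^ 3 = h
    rw [hdd, hh, Real.sinh_sq (A * x), hs2, hA2, mul_pow,
      show ψ₀ ^ 3 = 1 / (2 * (1 + 2 * c ^ 2)) * ψ₀ by rw [← hp2]; ring]
    have hgx := hden x
    field_simp
    ring
end

section
/- For α > 0, the limits of u₊(x) and u₋(x) as x → ±∞ both equal ψ₀, and the terminal value ψ₀ satisfies the cubic equation 2ψ₀³ − ψ₀ + h = 0. -/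
open Filter

private lemma cosh_top : Tendsto Real.cosh atTop atTop := by
  apply tendsto_atTop_mono (fun x => ?_) (Real.tendsto_exp_atTop.atTop_div_const two_pos)
  rw [Real.cosh_eq]
  have := (Real.exp_pos (-x)).le
  linarith

private lemma cosh_bot : Tendsto Real.cosh atBot atTop := by
  have : Tendsto (fun x : ℝ => Real.cosh (-x)) atBot atTop :=
    cosh_top.comp tendsto_neg_atBot_atTop
  simpa [Real.cosh_neg] using this

theorem stmt9 (α : ℝ) (hα : 0 < α) :
    let ψ₀ : ℝ := 1 / Real.sqrt (2 * (1 + 2 * Real.cosh α ^ 2))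
    let A : ℝ := Real.sqrt 2 * Real.sinh α / Real.sqrt (1 + 2 * Real.cosh α ^ 2)
    let h : ℝ := Real.sqrt 2 * Real.cosh α ^ 2 / (1 + 2 * Real.cosh α ^ 2) ^ ((3 : ℝ) / 2)
    let uplus : ℝ → ℝ := fun x =>
      ψ₀ * (1 + 2 * Real.sinh α ^ 2 / (1 + Real.cosh α * Real.cosh (A * x)))
    let uminus : ℝ → ℝ := fun x =>
      ψ₀ * (1 + 2 * Real.sinh α ^ 2 / (1 - Real.cosh α * Real.cosh (A * x)))
    Tendsto uplus atTop (nhds ψ₀) ∧ Tendsto uplus atBot (nhds ψ₀) ∧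
    Tendsto uminus atTop (nhds ψ₀) ∧ Tendsto uminus atBot (nhds ψ₀) ∧
    2 * ψ₀ ^ 3 - ψ₀ + h = 0 := by
  intro ψ₀ A h uplus uminus
  have hc : 0 < Real.cosh α := Real.cosh_pos α
  have hs : 0 < 1 + 2 * Real.cosh α ^ 2 := by positivity
  have hA : 0 < A := by
    have hsinh : 0 < Real.sinh α := Real.sinh_pos_iff.mpr hα
    have : 0 < Real.sqrt 2 := by positivity
    exact div_pos (by positivity) (Real.sqrt_pos.mpr hs)
  -- cosh (A * x) tends to atTop along atTop and atBot
  have hAx_top : Tendsto (fun x : ℝ => Real.cosh (A * x)) atTop atTop :=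
    cosh_top.comp (tendsto_id.const_mul_atTop hA)
  have hAx_bot : Tendsto (fun x : ℝ => Real.cosh (A * x)) atBot atTop :=
    cosh_bot.comp (tendsto_id.const_mul_atBot hA)
  -- generic limit facts
  have plus : ∀ l : Filter ℝ, Tendsto (fun x : ℝ => Real.cosh (A * x)) l atTop →
      Tendsto uplus l (nhds ψ₀) := by
    intro l hl
    have hden : Tendsto (fun x : ℝ => 1 + Real.cosh α * Real.cosh (A * x)) l atTop :=
      tendsto_atTop_add_const_left _ 1 (hl.const_mul_atTop hc)
    have hfrac : Tendsto (fun x : ℝ =>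
        2 * Real.sinh α ^ 2 / (1 + Real.cosh α * Real.cosh (A * x))) l (nhds 0) :=
      tendsto_const_nhds.div_atTop hden
    have := (hfrac.const_add 1).const_mul ψ₀
    simpa using this
  have minus : ∀ l : Filter ℝ, Tendsto (fun x : ℝ => Real.cosh (A * x)) l atTop →
      Tendsto uminus l (nhds ψ₀) := by
    intro l hl
    have hden : Tendsto (fun x : ℝ => 1 - Real.cosh α * Real.cosh (A * x)) l atBot := by
      have : Tendsto (fun x : ℝ => -(Real.cosh α * Real.cosh (A * x))) l atBot :=
        tendsto_neg_atTop_atBot.comp (hl.const_mul_atTop hc)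
      simpa [sub_eq_add_neg] using tendsto_atBot_add_const_left _ 1 this
    have hfrac : Tendsto (fun x : ℝ =>
        2 * Real.sinh α ^ 2 / (1 - Real.cosh α * Real.cosh (A * x))) l (nhds 0) := by
      have h1 : Tendsto (fun x : ℝ => (-(1 - Real.cosh α * Real.cosh (A * x)))⁻¹) l (nhds 0) :=
        (tendsto_neg_atBot_atTop.comp hden).inv_tendsto_atTop
      have h2 := (h1.const_mul (2 * Real.sinh α ^ 2)).neg
      simp only [mul_zero, neg_zero] at h2
      exact h2.congr (fun x => by rw [inv_neg]; ring)
    have := (hfrac.const_add 1).const_mul ψ₀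
    simpa using this
  refine ⟨plus _ hAx_top, plus _ hAx_bot, minus _ hAx_top, minus _ hAx_bot, ?_⟩
  -- the cubic equation
  set c := Real.cosh α with hcdef
  set q := Real.sqrt (1 + 2 * c ^ 2) with hqdef
  have hq : 0 < q := Real.sqrt_pos.mpr hs
  have hq2 : q ^ 2 = 1 + 2 * c ^ 2 := Real.sq_sqrt hs.le
  have h2 : (0:ℝ) < Real.sqrt 2 := by positivity
  have h22 : Real.sqrt 2 ^ 2 = 2 := Real.sq_sqrt (by norm_num)
  have hψ : ψ₀ = 1 / (Real.sqrt 2 * q) := by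
    simp only [ψ₀, hqdef, hcdef, Real.sqrt_mul (by norm_num : (0:ℝ) ≤ 2)]
  have hrpow : (1 + 2 * c ^ 2) ^ ((3:ℝ)/2) = q ^ 3 := by
    rw [hqdef, show ((3:ℝ)/2) = (1/2) * 3 by norm_num, Real.rpow_mul hs.le,
      ← Real.sqrt_eq_rpow, ← Real.rpow_natCast (Real.sqrt (1 + 2 * c ^ 2)) 3]
    norm_num
  have hh : h = Real.sqrt 2 * c ^ 2 / q ^ 3 := by
    simp only [h, ← hcdef, hrpow]
  rw [hψ, hh]
  field_simp
  linear_combination (-q ^ 2 + c ^ 2 * (Real.sqrt 2 ^ 2 + 2)) * h22 + (-2) * hq2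
end
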